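/- For all real R, G, B with R > B and G > B (not all equal), arccos(0.5((R−G)+(R−B))/√((R−G)² + (R−B)(G−B))) = π/3 + arctan(√3(G−R)/((G−B)+(R−B))). -/

import Mathlib

theorem kender_hue_sector_RB_GB (R G B : ℝ)
    (hRB : R > B) (hGB : G > B) (hne : ¬(R = G ∧ G = B))
    (hdisc : (R - G) ^ 2 + (R - B) * (G - B) > 0)
    (hden : G - B + (R - B) > 0) :
    Real.arccos (0.5 * ((R - G) + (R - B)) / Real.sqrt ((R - G) ^ 2 + (R - B) * (G - B)))
      = Real.pi / 3 + Real.arctan (Real.sqrt 3 * (G - R) / ((G - B) + (R - B))) := by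
  set s : ℝ := (G - B) + (R - B) with hs_def
  have hs : (0:ℝ) < s := by linarith
  set u : ℝ := Real.sqrt 3 * (G - R) / s with hu_def
  have h3 : (0:ℝ) < Real.sqrt 3 := by positivity
  have hs3 : Real.sqrt 3 ^ 2 = 3 := Real.sq_sqrt (by norm_num)
  -- arctan √3 = π/3
  have harct3 : Real.arctan (Real.sqrt 3) = Real.pi / 3 := by
    rw [show Real.sqrt 3 = Real.tan (Real.pi / 3) from (Real.tan_pi_div_three).symm]
    exact Real.arctan_tan (by linarith [Real.pi_pos]) (by linarith [Real.pi_pos])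
  have hult : u < Real.sqrt 3 := by
    rw [hu_def, div_lt_iff₀ hs]
    nlinarith
  have hugt : -Real.sqrt 3 < u := by
    rw [hu_def, lt_div_iff₀ hs]
    nlinarith
  have hlt : Real.arctan u < Real.pi / 3 := by
    rw [← harct3]; exact Real.arctan_strictMono hult
  have hgt : -(Real.pi / 3) < Real.arctan u := by
    rw [← harct3, ← Real.arctan_neg]; exact Real.arctan_strictMono hugt
  set D : ℝ := 3 * (R - G) ^ 2 + s ^ 2 with hD_def
  have hD : (0:ℝ) < D := by positivity
  have hsD : (0:ℝ) < Real.sqrt D := Real.sqrt_pos.mpr hD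
  have h1 : Real.sqrt ((R - G) ^ 2 + (R - B) * (G - B)) = Real.sqrt D / 2 := by
    rw [show (R - G) ^ 2 + (R - B) * (G - B) = D / 2 ^ 2 by rw [hD_def, hs_def]; ring]
    rw [Real.sqrt_div hD.le, Real.sqrt_sq (by norm_num : (0:ℝ) ≤ 2)]
  have h2 : Real.sqrt (1 + u ^ 2) = Real.sqrt D / s := by
    have : 1 + u ^ 2 = D / s ^ 2 := by
      rw [hu_def, hD_def]
      field_simp
      nlinarith [hs3]
    rw [this, Real.sqrt_div hD.le, Real.sqrt_sq hs.le]
  have hsq : (0:ℝ) < Real.sqrt (1 + u ^ 2) := by positivity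
  have key : Real.cos (Real.pi / 3 + Real.arctan u)
      = 0.5 * ((R - G) + (R - B)) / Real.sqrt ((R - G) ^ 2 + (R - B) * (G - B)) := by
    rw [Real.cos_add, Real.cos_pi_div_three, Real.sin_pi_div_three,
      Real.cos_arctan, Real.sin_arctan, h1, h2]
    have hD2 : Real.sqrt D ^ 2 = D := Real.sq_sqrt hD.le
    rw [hu_def]
    field_simp
    linear_combination (R - G) * hs3
  rw [← key, Real.arccos_cos (by linarith) (by linarith [Real.pi_pos])]
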